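/- Let d ≥ 2 and let Λ be a lattice of full rank in ℝ^d with dual lattice Λ*. Then N(Λ) > 0 if and only if N(Λ*) > 0. -/

import Mathlib

open scoped BigOperators

noncomputable section

/-- The multiplicative function `Π(x) = ∏ i |x_i|^{1/d}`. -/
def Pibar (d : ℕ) (x : Fin d → ℝ) : ℝ := ∏ i, |x i| ^ (1 / (d : ℝ))

/-- The norm minimum `N(Λ) = inf {Π(x)^d : x ∈ Λ, x ≠ 0}`. -/
def normMin (d : ℕ) (Λ : Set (Fin d → ℝ)) : ℝ :=
  sInf {r : ℝ | ∃ x ∈ Λ, x ≠ 0 ∧ r = Pibar d x ^ d}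

/-- `Λ` is a lattice of full rank in `ℝ^d`. -/
def IsFullLattice (d : ℕ) (Λ : Set (Fin d → ℝ)) : Prop :=
  ∃ A : Matrix (Fin d) (Fin d) ℝ, A.det ≠ 0 ∧
    Λ = {x | ∃ z : Fin d → ℤ, x = A.mulVec fun i => (z i : ℝ)}

/-- The dual lattice `Λ* = {y : ⟨y,x⟩ ∈ ℤ for all x ∈ Λ}`. -/
def dualLattice (d : ℕ) (Λ : Set (Fin d → ℝ)) : Set (Fin d → ℝ) :=
  {y | ∀ x ∈ Λ, ∃ n : ℤ, ∑ i, y i * x i = (n : ℝ)}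

namespace Stmt15

open MeasureTheory
open scoped Matrix

variable {d : ℕ}

/-- The lattice generated by the columns of `A`. -/
def LSet (d : ℕ) (A : Matrix (Fin d) (Fin d) ℝ) : Set (Fin d → ℝ) :=
  {x | ∃ z : Fin d → ℤ, x = A.mulVec fun i => (z i : ℝ)}

lemma pibar_pow (hd : d ≠ 0) (x : Fin d → ℝ) : Pibar d x ^ d = ∏ i, |x i| := by
  rw [Pibar, ← Finset.prod_pow]
  refine Finset.prod_congr rfl fun i _ => ?_
  rw [← Real.rpow_natCast (|x i| ^ (1 / (d : ℝ))) d, ← Real.rpow_mul (abs_nonneg _)]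
  rw [one_div, inv_mul_cancel₀ (by exact_mod_cast hd), Real.rpow_one]

lemma pibar_nonneg (d : ℕ) (x : Fin d → ℝ) : 0 ≤ Pibar d x :=
  Finset.prod_nonneg fun i _ => Real.rpow_nonneg (abs_nonneg _) _

lemma normMin_nonneg (d : ℕ) (Λ : Set (Fin d → ℝ)) : 0 ≤ normMin d Λ := by
  refine Real.sInf_nonneg fun r hr => ?_
  obtain ⟨x, -, -, rfl⟩ := hr
  exact pow_nonneg (pibar_nonneg d x) d

lemma normMin_le (hd : d ≠ 0) {Λ : Set (Fin d → ℝ)} {x : Fin d → ℝ} (hx : x ∈ Λ) (hx0 : x ≠ 0) :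
    normMin d Λ ≤ ∏ i, |x i| := by
  refine csInf_le ⟨0, fun r hr => ?_⟩ ⟨x, hx, hx0, (pibar_pow hd x).symm⟩
  obtain ⟨z, -, -, rfl⟩ := hr
  exact pow_nonneg (pibar_nonneg d z) d

lemma single_cast (i : Fin d) :
    (fun k => ((Pi.single i 1 : Fin d → ℤ) k : ℝ)) = Pi.single i (1 : ℝ) := by
  ext k
  by_cases h : k = i <;> simp [Pi.single_apply, h]

lemma LSet_nonzero {A : Matrix (Fin d) (Fin d) ℝ} (hA : A.det ≠ 0) (hd : d ≠ 0) :
    ∃ v ∈ LSet d A, v ≠ 0 := by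
  have : Nonempty (Fin d) := ⟨⟨0, Nat.pos_of_ne_zero hd⟩⟩
  obtain ⟨i⟩ := this
  refine ⟨A.mulVec (fun k => ((Pi.single i 1 : Fin d → ℤ) k : ℝ)), ⟨Pi.single i 1, rfl⟩, ?_⟩
  rw [single_cast]
  intro h
  apply hA
  apply Matrix.det_eq_zero_of_column_eq_zero i
  intro k
  have := congrFun h k
  simpa [Matrix.mulVec_single] using this

def colBasis (A : Matrix (Fin d) (Fin d) ℝ) (hA : A.det ≠ 0) : Module.Basis (Fin d) ℝ (Fin d → ℝ) :=
  (Pi.basisFun ℝ (Fin d)).map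
    (A.toLinearEquiv' (A.invertibleOfIsUnitDet hA.isUnit))

lemma colBasis_apply (A : Matrix (Fin d) (Fin d) ℝ) (hA : A.det ≠ 0) (i : Fin d) :
    colBasis A hA i = fun k => A k i := by
  ext k
  simp [colBasis, Matrix.toLinearEquiv', Matrix.toLin'_apply, Matrix.mulVec_single]

lemma span_colBasis (A : Matrix (Fin d) (Fin d) ℝ) (hA : A.det ≠ 0) :
    ((Submodule.span ℤ (Set.range (colBasis A hA))) : Set (Fin d → ℝ)) = LSet d A := by
  ext x
  rw [SetLike.mem_coe, Submodule.mem_span_range_iff_exists_fun]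
  constructor
  · rintro ⟨z, hz⟩
    refine ⟨z, ?_⟩
    rw [← hz]
    ext k
    simp only [Finset.sum_apply, Pi.smul_apply, colBasis_apply, Matrix.mulVec, dotProduct]
    exact Finset.sum_congr rfl fun i _ => by push_cast [zsmul_eq_mul]; ring
  · rintro ⟨z, rfl⟩
    refine ⟨z, ?_⟩
    ext k
    simp only [Finset.sum_apply, Pi.smul_apply, colBasis_apply, Matrix.mulVec, dotProduct]
    exact Finset.sum_congr rfl fun i _ => by push_cast [zsmul_eq_mul]; ring

instance spanCountable (A : Matrix (Fin d) (Fin d) ℝ) (hA : A.det ≠ 0) :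
    Countable ((Submodule.span ℤ (Set.range (colBasis A hA))).toAddSubgroup) := by
  have : Set.Countable ((Submodule.span ℤ (Set.range (colBasis A hA))) : Set (Fin d → ℝ)) := by
    rw [span_colBasis A hA]
    have : LSet d A = Set.range (fun z : Fin d → ℤ => A.mulVec fun i => (z i : ℝ)) := by
      ext x; simp [LSet, eq_comm, Set.mem_setOf_eq]
    rw [this]
    exact Set.countable_range _
  exact this.to_subtype

lemma volume_fund (A : Matrix (Fin d) (Fin d) ℝ) (hA : A.det ≠ 0) :
    MeasureTheory.volume (ZSpan.fundamentalDomain (colBasis A hA))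
      = ENNReal.ofReal |A.det| := by
  rw [ZSpan.volume_fundamentalDomain]
  congr 1
  have hmat : (Matrix.of ⇑(colBasis A hA)) = A.transpose := by
    ext i k; simp [colBasis_apply, Matrix.transpose_apply]
  rw [hmat, Matrix.det_transpose]

lemma det_updateRow_one (j : Fin d) (y : Fin d → ℝ) :
    ((1 : Matrix (Fin d) (Fin d) ℝ).updateRow j y).det = y j := by
  have hy : y = ∑ k, y k • (1 : Matrix (Fin d) (Fin d) ℝ) k := by
    ext i
    simp [Matrix.one_apply, Pi.single_apply]
  calc ((1 : Matrix (Fin d) (Fin d) ℝ).updateRow j y).det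
      = ((1 : Matrix (Fin d) (Fin d) ℝ).updateRow j
          (∑ k, y k • (1 : Matrix (Fin d) (Fin d) ℝ) k)).det := by rw [← hy]
    _ = y j • (1 : Matrix (Fin d) (Fin d) ℝ).det := Matrix.det_updateRow_sum _ j y
    _ = y j := by simp

/-- The key Minkowski-type lemma: if `y` pairs integrally with the lattice of `A`, `y j ≠ 0`,
and the box has a big enough volume, then there is a nonzero lattice point, small in all
coordinates except possibly the `j`-th, orthogonal to `y`. -/
lemma key (A : Matrix (Fin d) (Fin d) ℝ) (hA : A.det ≠ 0)
    (y : Fin d → ℝ) (j : Fin d) (hyj : y j ≠ 0)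
    (hint : ∀ x ∈ LSet d A, ∃ n : ℤ, ∑ i, y i * x i = (n : ℝ))
    (t : Fin d → ℝ) (ht : ∀ i, i ≠ j → 0 < t i)
    (hvol : |A.det| * |y j| < ∏ i ∈ Finset.univ.erase j, t i) :
    ∃ x ∈ LSet d A, x ≠ 0 ∧ (∀ i, i ≠ j → |x i| < t i) ∧ ∑ i, y i * x i = 0 := by
  classical
  set u : Fin d → ℝ := Function.update t j 1 with hu_def
  have hu : ∀ i, 0 < u i := by
    intro i
    by_cases h : i = j
    · subst h; simp [hu_def]
    · simpa [hu_def, Function.update_of_ne h] using ht i h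
  set M : Matrix (Fin d) (Fin d) ℝ := (1 : Matrix (Fin d) (Fin d) ℝ).updateRow j y with hM_def
  have hMdet : M.det = y j := det_updateRow_one j y
  set T : (Fin d → ℝ) →ₗ[ℝ] (Fin d → ℝ) := Matrix.toLin' M with hT_def
  have hTdet : LinearMap.det T = y j := by
    rw [hT_def, LinearMap.det_toLin', hMdet]
  have hTapp : ∀ x : Fin d → ℝ, ∀ i, T x i = if i = j then ∑ k, y k * x k else x i := by
    intro x i
    rw [hT_def, Matrix.toLin'_apply]
    by_cases h : i = j
    · subst h
      simp [hM_def, Matrix.mulVec, dotProduct, Matrix.updateRow_self]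
    · simp only [hM_def, Matrix.mulVec, dotProduct, Matrix.updateRow_ne h, if_neg h]
      simp [Matrix.one_apply, ite_mul]
  set box : Set (Fin d → ℝ) := Set.pi Set.univ fun i => Set.Ioo (-(u i)) (u i) with hbox_def
  set S : Set (Fin d → ℝ) := T ⁻¹' box with hS_def
  have hconv : Convex ℝ S :=
    (convex_pi fun i _ => convex_Ioo _ _).linear_preimage T
  have hsymm : ∀ x ∈ S, -x ∈ S := by
    intro x hx
    simp only [hS_def, Set.mem_preimage, map_neg, hbox_def, Set.mem_pi, Set.mem_univ,
      Set.mem_Ioo, forall_true_left, Pi.neg_apply] at hx ⊢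
    intro i
    obtain ⟨h1, h2⟩ := hx i
    constructor <;> linarith
  -- volume computations
  have hPpos : (0:ℝ) < ∏ i ∈ Finset.univ.erase j, t i :=
    lt_of_le_of_lt (by positivity) hvol
  have hvolS : volume S = ENNReal.ofReal (|y j|⁻¹ * (2 ^ d * ∏ i ∈ Finset.univ.erase j, t i)) := by
    rw [hS_def, Measure.addHaar_preimage_linearMap volume (by rw [hTdet]; exact hyj)]
    rw [hbox_def, volume_pi_pi]
    simp_rw [Real.volume_Ioo]
    rw [← ENNReal.ofReal_prod_of_nonneg (fun i _ => by have := hu i; linarith)]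
    rw [← ENNReal.ofReal_mul (by positivity)]
    congr 1
    have : ∀ i, u i - -u i = 2 * u i := fun i => by ring
    rw [Finset.prod_congr rfl fun i _ => this i, Finset.prod_mul_distrib, Finset.prod_const]
    have hprod_u : ∏ i, u i = ∏ i ∈ Finset.univ.erase j, t i := by
      rw [← Finset.mul_prod_erase Finset.univ u (Finset.mem_univ j)]
      have h1 : u j = 1 := by simp [hu_def]
      rw [h1, one_mul]
      exact Finset.prod_congr rfl fun i hi =>
        Function.update_of_ne (Finset.ne_of_mem_erase hi) _ _
    rw [hprod_u, Finset.card_univ, Fintype.card_fin, hTdet, abs_inv]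
  have hfund := ZSpan.isAddFundamentalDomain' (colBasis A hA) volume
  have hineq : volume (ZSpan.fundamentalDomain (colBasis A hA)) *
      2 ^ (Module.finrank ℝ (Fin d → ℝ)) < volume S := by
    rw [volume_fund A hA, hvolS, Module.finrank_fin_fun]
    have h2 : (2 : ENNReal) ^ d = ENNReal.ofReal ((2:ℝ) ^ d) := by
      rw [ENNReal.ofReal_pow (by norm_num)]
      norm_num
    rw [h2, ← ENNReal.ofReal_mul (abs_nonneg _)]
    rw [ENNReal.ofReal_lt_ofReal_iff (by positivity)]
    have hyj' : (0:ℝ) < |y j| := abs_pos.mpr hyj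
    rw [inv_mul_eq_div, lt_div_iff₀ hyj']
    have h2d : (0:ℝ) < 2 ^ d := by positivity
    calc |A.det| * 2 ^ d * |y j| = 2 ^ d * (|A.det| * |y j|) := by ring
      _ < 2 ^ d * ∏ i ∈ Finset.univ.erase j, t i := by
          exact (mul_lt_mul_iff_right₀ h2d).mpr hvol
  obtain ⟨x, hx0, hxS⟩ :=
    exists_ne_zero_mem_lattice_of_measure_mul_two_pow_lt_measure
      (μ := volume) hfund hsymm hconv hineq
  have hxL : (x : Fin d → ℝ) ∈ LSet d A := by
    rw [← span_colBasis A hA]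
    exact SetLike.coe_mem _
  have hxne : (x : Fin d → ℝ) ≠ 0 := by
    intro h
    apply hx0
    ext
    simpa using congrFun h _
  have hxbox : ∀ i, T (x : Fin d → ℝ) i ∈ Set.Ioo (-(u i)) (u i) := by
    intro i
    have := hxS
    rw [hS_def, Set.mem_preimage, hbox_def, Set.mem_pi] at this
    exact this i (Set.mem_univ i)
  have hsum0 : ∑ i, y i * (x : Fin d → ℝ) i = 0 := by
    obtain ⟨n, hn⟩ := hint _ hxL
    have hj := hxbox j
    rw [hTapp _ j, if_pos rfl] at hj
    rw [hn] at hj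
    have huj : u j = 1 := by simp [hu_def]
    rw [huj] at hj
    have : |(n : ℝ)| < 1 := abs_lt.mpr ⟨by linarith [hj.1], by linarith [hj.2]⟩
    have hn0 : n = 0 := by
      by_contra hne
      have : (1:ℝ) ≤ |(n:ℝ)| := by
        rw [← Int.cast_abs]
        exact_mod_cast Int.one_le_abs hne
      linarith
    rw [hn, hn0, Int.cast_zero]
  refine ⟨(x : Fin d → ℝ), hxL, hxne, fun i hi => ?_, hsum0⟩
  have hb := hxbox i
  rw [hTapp _ i, if_neg hi] at hb
  have : u i = t i := Function.update_of_ne hi _ _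
  rw [this] at hb
  exact abs_lt.mpr ⟨hb.1, hb.2⟩


lemma prod_bound {x y t : Fin d → ℝ} {j : Fin d} (hyj : y j ≠ 0)
    (hx : ∀ i, i ≠ j → |x i| ≤ t i)
    (hsum : ∑ i, y i * x i = 0) :
    ∏ i, |x i| ≤ (∏ i ∈ Finset.univ.erase j, t i) *
      ((∑ i ∈ Finset.univ.erase j, |y i| * t i) / |y j|) := by
  have hyj' : 0 < |y j| := abs_pos.mpr hyj
  have hxj : |x j| ≤ (∑ i ∈ Finset.univ.erase j, |y i| * t i) / |y j| := by
    rw [le_div_iff₀ hyj']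
    have h0 := Finset.add_sum_erase Finset.univ (fun i => y i * x i) (Finset.mem_univ j)
    have h1 : y j * x j = - ∑ i ∈ Finset.univ.erase j, y i * x i := by
      linarith [hsum, h0]
    have h2 : |x j| * |y j| = |∑ i ∈ Finset.univ.erase j, y i * x i| := by
      rw [mul_comm, ← abs_mul, h1, abs_neg]
    rw [h2]
    refine (Finset.abs_sum_le_sum_abs _ _).trans ?_
    refine Finset.sum_le_sum fun i hi => ?_
    rw [abs_mul]
    exact mul_le_mul_of_nonneg_left (hx i (Finset.ne_of_mem_erase hi)) (abs_nonneg _)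
  calc ∏ i, |x i| = |x j| * ∏ i ∈ Finset.univ.erase j, |x i| :=
        (Finset.mul_prod_erase Finset.univ _ (Finset.mem_univ j)).symm
    _ ≤ ((∑ i ∈ Finset.univ.erase j, |y i| * t i) / |y j|) *
        ∏ i ∈ Finset.univ.erase j, t i := by
        refine mul_le_mul hxj (Finset.prod_le_prod (fun i _ => abs_nonneg _)
          fun i hi => hx i (Finset.ne_of_mem_erase hi))
          (Finset.prod_nonneg fun i _ => abs_nonneg _) ?_
        exact le_trans (abs_nonneg _) hxj
    _ = _ := by ring

lemma stepZero (A : Matrix (Fin d) (Fin d) ℝ) (hA : A.det ≠ 0) (hd2 : 2 ≤ d)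
    {y : Fin d → ℝ} {i₀ : Fin d} (hi₀ : y i₀ = 0) {j : Fin d} (hyj : y j ≠ 0)
    (hint : ∀ x ∈ LSet d A, ∃ n : ℤ, ∑ i, y i * x i = (n : ℝ))
    {ε₀ : ℝ} (hε₀ : 0 < ε₀) :
    ∃ x ∈ LSet d A, x ≠ 0 ∧ ∏ i, |x i| < ε₀ := by
  classical
  have hij : i₀ ≠ j := fun h => hyj (h ▸ hi₀)
  set D := |A.det| with hD_def
  have hD : 0 < D := abs_pos.mpr hA
  have hyj' : 0 < |y j| := abs_pos.mpr hyj
  set sy : ℝ := ∑ i, |y i| with hsy_def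
  have hsy : 0 < sy := by
    have h1 : |y j| ≤ sy := Finset.single_le_sum (fun i _ => abs_nonneg (y i)) (Finset.mem_univ j)
    linarith
  set r : ℝ := ε₀ * |y j| / (2 * ((D * |y j| + 1) * sy)) with hr_def
  have hr : 0 < r := by positivity
  set t : Fin d → ℝ := fun i => if i = i₀ then (D * |y j| + 1) / r ^ (d - 2) else r with ht_def
  have ht : ∀ i, i ≠ j → 0 < t i := by
    intro i _
    by_cases h : i = i₀ <;> simp only [ht_def, h, if_true, if_false, if_neg] <;> positivity
  have hmem : i₀ ∈ Finset.univ.erase j := Finset.mem_erase.mpr ⟨hij, Finset.mem_univ _⟩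
  have hcard : ((Finset.univ.erase j).erase i₀).card = d - 2 := by
    rw [Finset.card_erase_of_mem hmem, Finset.card_erase_of_mem (Finset.mem_univ j),
      Finset.card_univ, Fintype.card_fin]
    omega
  have hprod : ∏ i ∈ Finset.univ.erase j, t i = D * |y j| + 1 := by
    rw [← Finset.mul_prod_erase _ t hmem]
    have h1 : ∏ i ∈ (Finset.univ.erase j).erase i₀, t i = r ^ (d - 2) := by
      rw [Finset.prod_congr rfl fun i hi => ?_, Finset.prod_const, hcard]
      simp only [ht_def, if_neg (Finset.ne_of_mem_erase hi)]
    rw [h1]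
    simp only [ht_def, if_pos rfl]
    field_simp
  obtain ⟨x, hxL, hx0, hxlt, hxsum⟩ := key A hA y j hyj hint t ht (by rw [hprod]; linarith)
  refine ⟨x, hxL, hx0, ?_⟩
  have hb := prod_bound hyj (fun i hi => le_of_lt (hxlt i hi)) hxsum
  have hsumb : ∑ i ∈ Finset.univ.erase j, |y i| * t i ≤ r * sy := by
    calc ∑ i ∈ Finset.univ.erase j, |y i| * t i ≤ ∑ i ∈ Finset.univ.erase j, r * |y i| := by
          refine Finset.sum_le_sum fun i hi => ?_
          by_cases h : i = i₀
          · subst h; rw [hi₀]; simp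
          · simp only [ht_def, if_neg h]; rw [mul_comm]
      _ ≤ ∑ i, r * |y i| := by
          refine Finset.sum_le_sum_of_subset_of_nonneg (Finset.erase_subset _ _)
            fun i _ _ => by positivity
      _ = r * sy := by rw [hsy_def, Finset.mul_sum]
  have hfinal : (D * |y j| + 1) * ((r * sy) / |y j|) = ε₀ / 2 := by
    rw [hr_def]
    field_simp
  calc ∏ i, |x i| ≤ (∏ i ∈ Finset.univ.erase j, t i) *
        ((∑ i ∈ Finset.univ.erase j, |y i| * t i) / |y j|) := hb
    _ ≤ (D * |y j| + 1) * ((r * sy) / |y j|) := by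
        rw [hprod]
        refine mul_le_mul_of_nonneg_left ?_ (by positivity)
        exact div_le_div_of_nonneg_right hsumb hyj'.le
    _ = ε₀ / 2 := hfinal
    _ < ε₀ := by linarith

lemma stepPos (A : Matrix (Fin d) (Fin d) ℝ) (hA : A.det ≠ 0) (hd2 : 2 ≤ d)
    {y : Fin d → ℝ} (hy : ∀ i, y i ≠ 0)
    (hint : ∀ x ∈ LSet d A, ∃ n : ℤ, ∑ i, y i * x i = (n : ℝ))
    {δ : ℝ} (hδ : 0 < δ)
    (hcond : |A.det| * ∏ i, |y i| < δ ^ (d - 1)) :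
    ∃ x ∈ LSet d A, x ≠ 0 ∧ ∏ i, |x i| ≤ ((d - 1 : ℕ) : ℝ) * δ ^ d / ∏ i, |y i| := by
  classical
  have hd0 : 0 < d := by omega
  set j : Fin d := ⟨0, hd0⟩ with hj_def
  have hyj : y j ≠ 0 := hy j
  have hyj' : 0 < |y j| := abs_pos.mpr hyj
  set ε := ∏ i, |y i| with hε_def
  have hεpos : 0 < ε := Finset.prod_pos fun i _ => abs_pos.mpr (hy i)
  set Q := ∏ i ∈ Finset.univ.erase j, |y i| with hQ_def
  have hQpos : 0 < Q := Finset.prod_pos fun i _ => abs_pos.mpr (hy i)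
  have hQε : |y j| * Q = ε := by
    rw [hQ_def, hε_def]
    exact Finset.mul_prod_erase Finset.univ (fun i => |y i|) (Finset.mem_univ j)
  set t : Fin d → ℝ := fun i => δ / |y i| with ht_def
  have ht : ∀ i, i ≠ j → 0 < t i := fun i _ => by
    have := abs_pos.mpr (hy i); simp only [ht_def]; positivity
  have hcard : (Finset.univ.erase j).card = d - 1 := by
    rw [Finset.card_erase_of_mem (Finset.mem_univ j), Finset.card_univ, Fintype.card_fin]
  have hprod_t : ∏ i ∈ Finset.univ.erase j, t i = δ ^ (d - 1) / Q := by
    simp only [ht_def]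
    rw [Finset.prod_div_distrib, Finset.prod_const, hcard, hQ_def]
  have hvol : |A.det| * |y j| < ∏ i ∈ Finset.univ.erase j, t i := by
    rw [hprod_t, lt_div_iff₀ hQpos]
    calc |A.det| * |y j| * Q = |A.det| * ε := by rw [← hQε]; ring
      _ < δ ^ (d - 1) := hcond
  obtain ⟨x, hxL, hx0, hxlt, hxsum⟩ := key A hA y j hyj hint t ht hvol
  refine ⟨x, hxL, hx0, ?_⟩
  have hb := prod_bound hyj (fun i hi => le_of_lt (hxlt i hi)) hxsum
  have hsum_t : ∑ i ∈ Finset.univ.erase j, |y i| * t i = ((d - 1 : ℕ) : ℝ) * δ := by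
    have h1 : ∀ i ∈ Finset.univ.erase j, |y i| * t i = δ := by
      intro i _
      have hyi : |y i| ≠ 0 := abs_ne_zero.mpr (hy i)
      simp only [ht_def]
      field_simp
    rw [Finset.sum_congr rfl h1, Finset.sum_const, hcard, nsmul_eq_mul]
  have heq : (δ ^ (d - 1) / Q) * ((((d - 1 : ℕ) : ℝ) * δ) / |y j|) =
      ((d - 1 : ℕ) : ℝ) * δ ^ d / ε := by
    have hd1 : d - 1 + 1 = d := by omega
    rw [div_mul_div_comm, ← hQε]
    rw [show δ ^ (d - 1) * (((d - 1 : ℕ) : ℝ) * δ) = ((d - 1 : ℕ) : ℝ) * δ ^ (d - 1 + 1) by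
      rw [pow_succ]; ring, hd1]
    rw [mul_comm Q (|y j|)]
  calc ∏ i, |x i| ≤ (∏ i ∈ Finset.univ.erase j, t i) *
        ((∑ i ∈ Finset.univ.erase j, |y i| * t i) / |y j|) := hb
    _ = ((d - 1 : ℕ) : ℝ) * δ ^ d / ε := by rw [hprod_t, hsum_t, heq]

lemma pairing (A : Matrix (Fin d) (Fin d) ℝ) (hA : A.det ≠ 0) :
    ∀ y ∈ LSet d ((A⁻¹)ᵀ), ∀ x ∈ LSet d A, ∃ n : ℤ, ∑ i, y i * x i = (n : ℝ) := by
  rintro y ⟨z, rfl⟩ x ⟨w, rfl⟩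
  refine ⟨dotProduct z w, ?_⟩
  have h1 : ∑ i, ((A⁻¹)ᵀ.mulVec fun i => (z i : ℝ)) i * (A.mulVec fun i => (w i : ℝ)) i
      = dotProduct ((A⁻¹)ᵀ.mulVec fun i => (z i : ℝ)) (A.mulVec fun i => (w i : ℝ)) := rfl
  rw [h1, Matrix.mulVec_transpose, Matrix.dotProduct_mulVec, Matrix.vecMul_vecMul,
    Matrix.nonsing_inv_mul A hA.isUnit, Matrix.vecMul_one]
  rw [dotProduct]
  push_cast [dotProduct]
  rfl

lemma dual_eq (A : Matrix (Fin d) (Fin d) ℝ) (hA : A.det ≠ 0) :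
    dualLattice d (LSet d A) = LSet d ((A⁻¹)ᵀ) := by
  ext y
  constructor
  · intro hy
    have h := fun i : Fin d =>
      hy (A.mulVec fun k => ((Pi.single i 1 : Fin d → ℤ) k : ℝ)) ⟨Pi.single i 1, rfl⟩
    choose n hn using h
    refine ⟨n, ?_⟩
    have hvm : Matrix.vecMul y A = fun i => (n i : ℝ) := by
      ext i
      rw [← hn i, single_cast]
      rw [show (∑ k, y k * (A.mulVec (Pi.single i (1:ℝ))) k)
          = dotProduct y (A.mulVec (Pi.single i (1:ℝ))) from rfl]
      rw [Matrix.dotProduct_mulVec]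
      simp [dotProduct_single]
    have : (A⁻¹)ᵀ.mulVec (fun i => (n i : ℝ)) = y := by
      rw [Matrix.mulVec_transpose, ← hvm, Matrix.vecMul_vecMul,
        Matrix.mul_nonsing_inv A hA.isUnit, Matrix.vecMul_one]
    exact this.symm
  · intro hy x hx
    exact pairing A hA y hy x hx

lemma det_inv_transpose_ne (A : Matrix (Fin d) (Fin d) ℝ) (hA : A.det ≠ 0) :
    ((A⁻¹)ᵀ).det ≠ 0 := by
  rw [Matrix.det_transpose, Matrix.det_nonsing_inv, Ring.inverse_eq_inv']
  exact inv_ne_zero hA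

lemma main (A : Matrix (Fin d) (Fin d) ℝ) (hA : A.det ≠ 0) (hd2 : 2 ≤ d)
    (h : 0 < normMin d (LSet d A)) : 0 < normMin d (LSet d ((A⁻¹)ᵀ)) := by
  classical
  set B := (A⁻¹)ᵀ with hB_def
  have hBdet : B.det ≠ 0 := det_inv_transpose_ne A hA
  by_contra hcon
  have hzero : normMin d (LSet d B) = 0 := le_antisymm (not_lt.mp hcon) (normMin_nonneg _ _)
  have hd0 : d ≠ 0 := by omega
  set m := normMin d (LSet d A) with hm_def
  set D := |A.det| with hD_def
  have hD : 0 < D := abs_pos.mpr hA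
  have hd1R : (1:ℝ) ≤ ((d - 1 : ℕ) : ℝ) := by
    have : 1 ≤ d - 1 := by omega
    exact_mod_cast this
  set K : ℝ := 2 * D * ((d - 1 : ℕ) : ℝ) + 1 with hK_def
  have hKpos : 1 < K := by nlinarith
  set c : ℝ := (m / K) ^ (d - 1) / (2 * D) with hc_def
  have hmK : 0 < m / K := div_pos h (by linarith)
  have hcpos : 0 < c := by positivity
  obtain ⟨y, hyL, hy0, hys⟩ : ∃ y ∈ LSet d B, y ≠ 0 ∧ ∏ i, |y i| < c := by
    by_contra hno
    push_neg at hno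
    have hle : c ≤ normMin d (LSet d B) := by
      apply le_csInf
      · obtain ⟨v, hv, hv0⟩ := LSet_nonzero hBdet hd0
        exact ⟨_, v, hv, hv0, rfl⟩
      · rintro r ⟨x, hx, hx0, rfl⟩
        rw [pibar_pow hd0]
        exact hno x hx hx0
    rw [hzero] at hle
    linarith
  have hint : ∀ x ∈ LSet d A, ∃ n : ℤ, ∑ i, y i * x i = (n : ℝ) :=
    pairing A hA y hyL
  by_cases hz : ∃ i₀, y i₀ = 0
  · obtain ⟨i₀, hi₀⟩ := hz
    obtain ⟨j, hyj⟩ : ∃ j, y j ≠ 0 := by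
      by_contra hall
      push_neg at hall
      exact hy0 (funext fun i => hall i)
    obtain ⟨x, hxL, hx0, hxp⟩ := stepZero A hA hd2 hi₀ hyj hint h
    linarith [normMin_le hd0 hxL hx0]
  · push_neg at hz
    set ε := ∏ i, |y i| with hε_def
    have hεpos : 0 < ε := Finset.prod_pos fun i _ => abs_pos.mpr (hz i)
    set δ : ℝ := (2 * D * ε) ^ (((d - 1 : ℕ) : ℝ)⁻¹) with hδ_def
    have h2Dε : 0 < 2 * D * ε := by positivity
    have hδpos : 0 < δ := Real.rpow_pos_of_pos h2Dε _
    have hδpow : δ ^ (d - 1) = 2 * D * ε :=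
      Real.rpow_inv_natCast_pow (le_of_lt h2Dε) (by omega)
    have hcond : |A.det| * ∏ i, |y i| < δ ^ (d - 1) := by
      rw [hδpow, ← hD_def, ← hε_def]
      nlinarith
    obtain ⟨x, hxL, hx0, hxp⟩ := stepPos A hA hd2 hz hint hδpos hcond
    have hδd : ((d - 1 : ℕ) : ℝ) * δ ^ d / ε = ((d - 1 : ℕ) : ℝ) * (2 * D) * δ := by
      have hd1 : d - 1 + 1 = d := by omega
      rw [← hd1, pow_succ, hδpow]
      field_simp
    have hδm : δ < m / K := by
      refine lt_of_pow_lt_pow_left₀ (d - 1) (le_of_lt hmK) ?_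
      rw [hδpow]
      calc 2 * D * ε < 2 * D * c := by nlinarith
        _ = (m / K) ^ (d - 1) := by
            rw [hc_def]
            field_simp
    have hxm : ∏ i, |x i| < m := by
      have hKd : ((d - 1 : ℕ) : ℝ) * (2 * D) = K - 1 := by rw [hK_def]; ring
      have hK0 : (0:ℝ) < K := by linarith
      have hδK : δ * K < m := by
        have := (lt_div_iff₀ hK0).mp hδm
        linarith
      calc ∏ i, |x i| ≤ ((d - 1 : ℕ) : ℝ) * δ ^ d / ε := hxp
        _ = ((d - 1 : ℕ) : ℝ) * (2 * D) * δ := hδd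
        _ = (K - 1) * δ := by rw [hKd]
        _ < m := by nlinarith
    linarith [normMin_le hd0 hxL hx0]

end Stmt15

/-- For a full-rank lattice `Λ ⊆ ℝ^d` (`d ≥ 2`): `N(Λ) > 0` iff `N(Λ*) > 0`. -/
theorem stmt_15 (d : ℕ) (hd : 2 ≤ d) (Λ : Set (Fin d → ℝ)) (hΛ : IsFullLattice d Λ) :
    0 < normMin d Λ ↔ 0 < normMin d (dualLattice d Λ) := by
  classical
  obtain ⟨A, hA, hset⟩ := hΛ
  have hΛL : Λ = Stmt15.LSet d A := hset
  have hdual : dualLattice d Λ = Stmt15.LSet d (A⁻¹).transpose := by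
    rw [hΛL]
    exact Stmt15.dual_eq A hA
  constructor
  · intro h
    rw [hdual]
    exact Stmt15.main A hA hd (hΛL ▸ h)
  · intro h
    rw [hΛL]
    have hBdet := Stmt15.det_inv_transpose_ne A hA
    have h2 := Stmt15.main (A⁻¹).transpose hBdet hd (hdual ▸ h)
    have h3 : ((A⁻¹).transpose⁻¹).transpose = A := by
      rw [Matrix.transpose_nonsing_inv, Matrix.transpose_transpose,
        Matrix.nonsing_inv_nonsing_inv A hA.isUnit]
    rwa [h3] at h2


end
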